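/- Let T and S be trivial left braces (i.e., abelian groups with a+b = a·b), let b : T × T → S be a symmetric Z-bilinear map, and let α : S → Aut(T,+) be a group homomorphism such that α_s preserves b (i.e., b(α_s(t1),α_s(t2)) = b(t1,t2)) for all s ∈ S. Then T × S with operations (t1,s1)+(t2,s2) = (t1+t2, s1+s2+b(t1,t2)) and (t1,s1)·(t2,s2) = (t1+α_{s1}(t2), s1+s2) is a left brace. -/

import Mathlib

/-- The asymmetric product of two trivial left braces (abelian groups `T`, `S`
with `a + b = a · b`) via a symmetric bilinear map `b : T × T → S` and a group
homomorphism `α : S → Aut(T,+)` preserving `b` is a left brace: `T × S` with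
`(t1,s1)+(t2,s2) = (t1+t2, s1+s2+b t1 t2)` and
`(t1,s1)·(t2,s2) = (t1 + α s1 t2, s1+s2)` satisfies all left brace axioms. -/
theorem stmt3 {T S : Type*} [AddCommGroup T] [AddCommGroup S]
    (b : T → T → S)
    (hbl : ∀ u v w : T, b (u + v) w = b u w + b v w)
    (hbr : ∀ u v w : T, b u (v + w) = b u v + b u w)
    (hbs : ∀ u v : T, b u v = b v u)
    (α : S → T ≃+ T)
    (hα : ∀ s s' : S, α (s + s') = α s + α s')
    (hαb : ∀ (s : S) (u v : T), b (α s u) (α s v) = b u v) :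
    let add : T × S → T × S → T × S := fun x y => (x.1 + y.1, x.2 + y.2 + b x.1 y.1)
    let mul : T × S → T × S → T × S := fun x y => (x.1 + α x.2 y.1, x.2 + y.2)
    (∀ x y z : T × S, add (add x y) z = add x (add y z)) ∧
    (∀ x y : T × S, add x y = add y x) ∧
    (∀ x : T × S, add (0, 0) x = x) ∧
    (∀ x : T × S, ∃ y : T × S, add x y = (0, 0)) ∧
    (∀ x y z : T × S, mul (mul x y) z = mul x (mul y z)) ∧
    (∀ x : T × S, mul (0, 0) x = x) ∧
    (∀ x : T × S, mul x (0, 0) = x) ∧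
    (∀ x : T × S, ∃ y : T × S, mul x y = (0, 0) ∧ mul y x = (0, 0)) ∧
    (∀ a c d : T × S, add (mul a (add c d)) a = add (mul a c) (mul a d)) := by
  have hb0l : ∀ w : T, b 0 w = 0 := by
    intro w
    have := hbl 0 0 w
    simpa using this.symm
  have hb0r : ∀ w : T, b w 0 = 0 := fun w => (hbs w 0).trans (hb0l w)
  have hα0 : α 0 = 0 := by
    have h := hα 0 0
    rw [add_zero] at h
    exact (add_left_cancel (a := α 0) (by rw [← h, add_zero])).symm
  intro add mul
  refine ⟨?_, ?_, ?_, ?_, ?_, ?_, ?_, ?_, ?_⟩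
  · intro x y z
    simp only [add, Prod.mk.injEq, hbl]
    constructor
    · abel
    · rw [hbr]; abel
  · intro x y
    simp only [add, Prod.mk.injEq]
    exact ⟨add_comm _ _, by rw [hbs]; abel⟩
  · intro x
    simp [add, hb0l]
  · intro x
    exact ⟨(-x.1, -x.2 + b x.1 x.1), by
      simp only [add, Prod.mk.injEq]
      constructor
      · abel
      · have h0 : b x.1 x.1 + b x.1 (-x.1) = 0 := by rw [← hbr]; simp [hb0r]
        calc x.2 + (-x.2 + b x.1 x.1) + b x.1 (-x.1)
            = (b x.1 x.1 + b x.1 (-x.1)) + (x.2 + -x.2) := by abel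
          _ = 0 := by rw [h0]; simp⟩
  · intro x y z
    simp only [mul, Prod.mk.injEq, hα]
    exact ⟨by simp [add_assoc], add_assoc _ _ _⟩
  · intro x
    simp [mul, hα0]
  · intro x
    simp [mul]
  · intro x
    refine ⟨(-(α (-x.2) x.1), -x.2), ?_, ?_⟩
    · simp only [mul, Prod.mk.injEq]
      constructor
      · have : α x.2 (α (-x.2) x.1) = x.1 := by
          have h := hα x.2 (-x.2)
          rw [add_neg_cancel, hα0] at h
          simpa using (DFunLike.congr_fun h x.1).symm
        simp [this]
      · simp
    · simp [mul]
  · intro a c d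
    simp only [mul, add, Prod.mk.injEq]
    constructor
    · simp only [map_add]; abel
    · simp only [hbl, hbr, hαb, map_add]
      rw [hbs a.1 (α a.2 d.1)]
      abel
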